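/- Let d ≥ 1, σ > 0, and let μ be the d-fold product measure on ℝ^d whose coordinates are i.i.d. real Gaussian with mean 0 and variance σ². Then for every η ∈ (0, 1), μ( { g ∈ ℝ^d : ∑_{i=1}^d g_i² ≥ σ²( d + 2√(d·log(1/η)) + 2·log(1/η) ) } ) ≤ η. (Lemma A.2, Gaussian vector norm bound of Laurent–Massart type, as used in the paper to control the DP noise vector.) -/

import Mathlib

open Matrix

/-- Operator norm of a square real matrix induced by the Euclidean norm. -/
noncomputable def matOpNorm {d : ℕ} (A : Matrix (Fin d) (Fin d) ℝ) : ℝ :=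
  ‖Matrix.toEuclideanCLM (𝕜 := ℝ) A‖

/-- Euclidean norm of a vector in ℝ^d. -/
noncomputable def vnorm {d : ℕ} (v : Fin d → ℝ) : ℝ :=
  Real.sqrt (∑ i, (v i) ^ 2)

/-- Frobenius norm of a square real matrix. -/
noncomputable def frobNorm {d : ℕ} (A : Matrix (Fin d) (Fin d) ℝ) : ℝ :=
  Real.sqrt (∑ i, ∑ j, (A i j) ^ 2)

/-- Inverse of the (unique symmetric positive definite) square root of a
positive definite matrix: `M^{-1/2}`. -/
noncomputable def pdInvSqrt {d : ℕ} {M : Matrix (Fin d) (Fin d) ℝ} (hM : M.PosDef) :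
    Matrix (Fin d) (Fin d) ℝ :=
  (hM.posSemidef.1.eigenvectorUnitary.1 * diagonal ((↑) ∘ (√·) ∘ hM.posSemidef.1.eigenvalues) *
    (star hM.posSemidef.1.eigenvectorUnitary : Matrix (Fin d) (Fin d) ℝ))⁻¹

/-- Smallest eigenvalue of a real symmetric matrix, via the Rayleigh quotient
(infimum of `vᵀ A v` over Euclidean-unit vectors `v`). -/
noncomputable def lamMin {d : ℕ} (A : Matrix (Fin d) (Fin d) ℝ) : ℝ :=
  ⨅ v : {v : Fin d → ℝ // ∑ i, (v i) ^ 2 = 1}, dotProduct v.1 (A *ᵥ v.1)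

/-- Largest eigenvalue of a real symmetric matrix, via the Rayleigh quotient
(supremum of `vᵀ A v` over Euclidean-unit vectors `v`). -/
noncomputable def lamMax {d : ℕ} (A : Matrix (Fin d) (Fin d) ℝ) : ℝ :=
  ⨆ v : {v : Fin d → ℝ // ∑ i, (v i) ^ 2 = 1}, dotProduct v.1 (A *ᵥ v.1)

/-- Loewner order on real symmetric matrices: `A ⪯ B` iff `B - A` is positive
semidefinite. -/
def loewnerLE {d : ℕ} (A B : Matrix (Fin d) (Fin d) ℝ) : Prop :=
  (B - A).PosSemidef

open MeasureTheory ProbabilityTheory Real NNReal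

lemma gauss_exp_sq (v : ℝ≥0) (hv : v ≠ 0) (c : ℝ) (hc : 2 * c * v < 1) :
    Integrable (fun x => Real.exp (c * x ^ 2)) (gaussianReal 0 v) ∧
    ∫ x, Real.exp (c * x ^ 2) ∂(gaussianReal 0 v) = 1 / Real.sqrt (1 - 2 * c * v) := by
  have hv' : (0:ℝ) < v := by
    have : (0:ℝ≥0) < v := pos_iff_ne_zero.mpr hv
    exact_mod_cast this
  have hb : 0 < 1 / (2 * (v:ℝ)) - c := by
    rw [sub_pos, lt_div_iff₀ (by positivity)]
    nlinarith
  have hpdf : ∀ x : ℝ, gaussianPDFReal 0 v x * Real.exp (c * x ^ 2)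
      = (Real.sqrt (2 * Real.pi * v))⁻¹ * Real.exp (-(1 / (2 * (v:ℝ)) - c) * x ^ 2) := by
    intro x
    rw [gaussianPDFReal]
    rw [mul_assoc, ← Real.exp_add]
    congr 2
    field_simp
    ring
  have hmeas : Measurable fun x : ℝ => (gaussianPDFReal 0 v x).toNNReal :=
    (measurable_gaussianPDFReal 0 v).real_toNNReal
  have hrw : gaussianReal 0 v
      = volume.withDensity (fun x => ((gaussianPDFReal 0 v x).toNNReal : ENNReal)) := by
    rw [gaussianReal_of_var_ne_zero _ hv]
    rfl
  have hsmul : ∀ x : ℝ, ((gaussianPDFReal 0 v x).toNNReal : ℝ) • Real.exp (c * x ^ 2)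
      = (Real.sqrt (2 * Real.pi * v))⁻¹ * Real.exp (-(1 / (2 * (v:ℝ)) - c) * x ^ 2) := by
    intro x
    rw [smul_eq_mul, Real.coe_toNNReal _ (gaussianPDFReal_nonneg 0 v x), hpdf x]
  have hint : Integrable (fun x : ℝ =>
      (Real.sqrt (2 * Real.pi * v))⁻¹ * Real.exp (-(1 / (2 * (v:ℝ)) - c) * x ^ 2)) :=
    (integrable_exp_neg_mul_sq hb).const_mul _
  constructor
  · rw [hrw, integrable_withDensity_iff_integrable_coe_smul hmeas]
    exact hint.congr (Filter.Eventually.of_forall fun x => (hsmul x).symm)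
  · rw [hrw, integral_withDensity_eq_integral_smul hmeas]
    simp_rw [NNReal.smul_def, hsmul]
    rw [integral_const_mul, integral_gaussian]
    have h1 : (0:ℝ) < 1 - 2*c*v := by nlinarith
    rw [show Real.pi / (1 / (2 * (v:ℝ)) - c) = 2 * Real.pi * v / (1 - 2*c*(v:ℝ)) by
      rw [div_eq_div_iff hb.ne' h1.ne']; field_simp]
    rw [Real.sqrt_div (by positivity : (0:ℝ) ≤ 2*Real.pi*(v:ℝ))]
    have hA : Real.sqrt (2*Real.pi*(v:ℝ)) ≠ 0 := by positivity
    field_simp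

lemma pi_prod (d : ℕ) (m : MeasureTheory.Measure ℝ) [MeasureTheory.IsProbabilityMeasure m]
    (f : ℝ → ℝ) (hf : MeasureTheory.Integrable f m) :
    MeasureTheory.Integrable (fun x : Fin d → ℝ => ∏ i, f (x i))
      (MeasureTheory.Measure.pi fun _ => m) ∧
    ∫ x : Fin d → ℝ, ∏ i, f (x i) ∂(MeasureTheory.Measure.pi fun _ => m)
      = (∫ x, f x ∂m) ^ d := by
  letI : MeasureSpace ℝ := ⟨m⟩
  haveI : SigmaFinite (volume : Measure ℝ) := inferInstanceAs (SigmaFinite m)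
  have hvol : (MeasureTheory.Measure.pi fun _ : Fin d => m) = (volume : Measure (Fin d → ℝ)) := rfl
  refine ⟨?_, ?_⟩
  · rw [hvol]; exact MeasureTheory.Integrable.fintype_prod (fun _ => hf)
  · rw [hvol]
    simpa [hvol] using MeasureTheory.integral_fintype_prod_eq_pow (ι := Fin d) f (μ := m)

/-- Lemma A.2, Laurent–Massart type Gaussian norm bound: for the
`d`-fold product of centered Gaussians with variance `σ²`, the mass of
`{g : ∑ g_i² ≥ σ²(d + 2√(d·log(1/η)) + 2·log(1/η))}` is at most `η`. -/
theorem stmt14 (d : ℕ) (hd : 1 ≤ d) (σ : ℝ) (hσ : 0 < σ)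
    (η : ℝ) (hη : η ∈ Set.Ioo (0 : ℝ) 1) :
    (MeasureTheory.Measure.pi fun _ : Fin d =>
        ProbabilityTheory.gaussianReal 0 ⟨σ ^ 2, sq_nonneg σ⟩)
      {g : Fin d → ℝ |
        σ ^ 2 * ((d : ℝ) + 2 * Real.sqrt ((d : ℝ) * Real.log (1 / η)) + 2 * Real.log (1 / η)) ≤
          ∑ i, (g i) ^ 2} ≤ ENNReal.ofReal η := by
  obtain ⟨hη0, hη1⟩ := hη
  set v : ℝ≥0 := ⟨σ ^ 2, sq_nonneg σ⟩ with hv_def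
  have hvv : (v : ℝ) = σ ^ 2 := rfl
  have hvne : v ≠ 0 := by
    refine fun h => (by positivity : (0:ℝ) < σ ^ 2).ne' ?_
    rw [← hvv, h]; simp
  set L := Real.log (1 / η) with hL_def
  have hL : 0 < L := Real.log_pos (one_lt_one_div hη0 hη1)
  have hd0 : (0:ℝ) < d := by exact_mod_cast Nat.lt_of_lt_of_le Nat.zero_lt_one hd
  set r := Real.sqrt (L / d) with hr_def
  have hr : 0 < r := Real.sqrt_pos.mpr (div_pos hL hd0)
  have hr2 : (d:ℝ) * r ^ 2 = L := by
    rw [hr_def, Real.sq_sqrt (div_pos hL hd0).le]; field_simp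
  have hsq : Real.sqrt ((d:ℝ) * L) = (d:ℝ) * r := by
    rw [show (d:ℝ) * L = ((d:ℝ) * r) ^ 2 by rw [← hr2]; ring, Real.sqrt_sq (by positivity)]
  have hy : (0:ℝ) < 1 + 2*r := by linarith
  set s := r / (1 + 2*r) with hs_def
  have hs0 : 0 < s := div_pos hr hy
  have hs1 : 1 - 2*s = (1 + 2*r)⁻¹ := by rw [hs_def]; field_simp; ring
  have hs2 : 2*s < 1 := by
    have : (0:ℝ) < (1 + 2*r)⁻¹ := by positivity
    linarith [hs1]
  set lam := s / σ^2 with hlam_def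
  have hlam0 : 0 < lam := div_pos hs0 (by positivity)
  have hcv : 2 * lam * (v:ℝ) = 2*s := by
    rw [hvv, hlam_def]; field_simp
  obtain ⟨hInt1, hVal1⟩ := gauss_exp_sq v hvne lam (by rw [hcv]; exact hs2)
  have hVal1' : ∫ x, Real.exp (lam * x ^ 2) ∂(ProbabilityTheory.gaussianReal 0 v)
      = Real.sqrt (1 + 2*r) := by
    rw [hVal1, hcv, hs1, Real.sqrt_inv, one_div, inv_inv]
  set μ := MeasureTheory.Measure.pi fun _ : Fin d => ProbabilityTheory.gaussianReal 0 v with hμ_def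
  obtain ⟨hIntd, hVald⟩ := pi_prod d (ProbabilityTheory.gaussianReal 0 v)
    (fun x => Real.exp (lam * x ^ 2)) hInt1
  have hXeq : ∀ g : Fin d → ℝ,
      Real.exp (lam * ∑ i, (g i) ^ 2) = ∏ i, Real.exp (lam * (g i) ^ 2) := by
    intro g; rw [Finset.mul_sum, Real.exp_sum]
  have hIntX : MeasureTheory.Integrable
      (fun g : Fin d → ℝ => Real.exp (lam * ∑ i, (g i) ^ 2)) μ :=
    hIntd.congr (Filter.Eventually.of_forall fun g => (hXeq g).symm)
  have hmgf : ProbabilityTheory.mgf (fun g : Fin d → ℝ => ∑ i, (g i) ^ 2) μ lam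
      = (Real.sqrt (1 + 2*r)) ^ d := by
    rw [ProbabilityTheory.mgf]
    calc ∫ g, Real.exp (lam * ∑ i, (g i) ^ 2) ∂μ
        = ∫ g : Fin d → ℝ, ∏ i, Real.exp (lam * (g i) ^ 2) ∂μ := by simp_rw [hXeq]
      _ = (∫ x, Real.exp (lam * x ^ 2) ∂(ProbabilityTheory.gaussianReal 0 v)) ^ d := hVald
      _ = (Real.sqrt (1 + 2*r)) ^ d := by rw [hVal1']
  rw [hsq]
  set E := σ ^ 2 * ((d:ℝ) + 2 * ((d:ℝ) * r) + 2 * L) with hE_def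
  have key := ProbabilityTheory.measure_ge_le_exp_mul_mgf
    (X := fun g : Fin d → ℝ => ∑ i, (g i) ^ 2) (μ := μ) (t := lam) E hlam0.le hIntX
  rw [hmgf] at key
  have hlε : lam * E = s * ((d:ℝ) + 2 * ((d:ℝ) * r) + 2 * L) := by
    rw [hlam_def, hE_def]; field_simp
  have hlog : Real.log (1 + 2*r) ≤ ((1 + 2*r) - (1 + 2*r)⁻¹) / 2 := by
    have h := Real.self_le_sinh_iff.mpr (Real.log_nonneg (by linarith) : 0 ≤ Real.log (1 + 2*r))
    rw [Real.sinh_log hy] at h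
    exact h
  have hiy : ((1 + 2*r) - (1 + 2*r)⁻¹) / 2 = 2 * (r * (1 + r) / (1 + 2*r)) := by
    field_simp
    ring
  have hkeyeq : -(s * ((d:ℝ) + 2 * ((d:ℝ) * r) + 2 * L)) + (d:ℝ) * (r * (1 + r) / (1 + 2*r))
      = -L := by
    rw [hs_def, ← hr2]; field_simp; ring
  have hpow : (Real.sqrt (1 + 2*r)) ^ d
      = Real.exp ((d:ℝ) * (Real.log (1 + 2*r) / 2)) := by
    have hlp : Real.log ((Real.sqrt (1 + 2*r)) ^ d) = (d:ℝ) * (Real.log (1 + 2*r) / 2) := by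
      rw [Real.log_pow, Real.log_sqrt hy.le]
      try push_cast
      try ring
    rw [← Real.exp_log (pow_pos (Real.sqrt_pos.mpr hy) d), hlp]
  have hηexp : η = Real.exp (-L) := by
    rw [← Real.exp_log hη0]
    congr 1
    rw [hL_def, one_div, Real.log_inv, neg_neg]
  have hfinal : Real.exp (-lam * E) * (Real.sqrt (1 + 2*r)) ^ d ≤ η := by
    rw [hpow, ← Real.exp_add, hηexp]
    apply Real.exp_le_exp.mpr
    have h2 : (d:ℝ) * (Real.log (1 + 2*r) / 2) ≤ (d:ℝ) * (r * (1 + r) / (1 + 2*r)) := by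
      apply mul_le_mul_of_nonneg_left _ hd0.le
      have := hlog
      rw [hiy] at this
      linarith
    linarith [hlε, h2, hkeyeq]
  have htoReal : (μ {g : Fin d → ℝ | E ≤ ∑ i, (g i) ^ 2}).toReal ≤ η := key.trans hfinal
  calc μ {g : Fin d → ℝ | E ≤ ∑ i, (g i) ^ 2}
      = ENNReal.ofReal (μ {g : Fin d → ℝ | E ≤ ∑ i, (g i) ^ 2}).toReal :=
        (ENNReal.ofReal_toReal (MeasureTheory.measure_ne_top μ _)).symm
    _ ≤ ENNReal.ofReal η := ENNReal.ofReal_le_ofReal htoReal
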